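/- Let D- be a canonical negative Boolean automaton double-cycle where the left cycle has odd size n > 1. Then any configuration x with x^ℓ = (10)^{(n-1)/2}1 (alternating word of odd length n starting and ending with 1) is irreversible: if x' is obtained from x by one effective asynchronous update, then x is not reachable from x' by any sequence of asynchronous updates. -/

import Mathlib

/-- A configuration of a Boolean automaton double-cycle with cycles of sizes `n`
and `m`: the shared automaton `c` is index 0 of both cycles (so valid
configurations satisfy `x.1 0 = x.2 0`). -/
abbrev Cfg (n m : ℕ) := (Fin n → Bool) × (Fin m → Bool)

/-- One asynchronous single-automaton update in a double-cycle whose shared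
automaton `c` computes `fc`; every non-shared automaton copies its predecessor. -/
inductive Step {n m : ℕ} (fc : Cfg n m → Bool) : Cfg n m → Cfg n m → Prop
  | left (x : Cfg n m) (i : Fin n) (hi : 1 ≤ i.val) :
      Step fc x (Function.update x.1 i (x.1 ⟨i.val - 1, by have := i.isLt; omega⟩), x.2)
  | right (x : Cfg n m) (j : Fin m) (hj : 1 ≤ j.val) :
      Step fc x (x.1, Function.update x.2 j (x.2 ⟨j.val - 1, by have := j.isLt; omega⟩))
  | center (x : Cfg n m) (i : Fin n) (j : Fin m) (hi : i.val = 0) (hj : j.val = 0) :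
      Step fc x (Function.update x.1 i (fc x), Function.update x.2 j (fc x))

/-- `Steps fc k x y`: configuration `y` is obtained from `x` by exactly `k`
asynchronous single-automaton updates. -/
def Steps {n m : ℕ} (fc : Cfg n m → Bool) : ℕ → Cfg n m → Cfg n m → Prop
  | 0, x, y => x = y
  | k + 1, x, y => ∃ z, Step fc x z ∧ Steps fc k z y

namespace My15

/-- term of the potential at index k -/
def tm {m : ℕ} (y : Fin m → Bool) (k : Fin m) : ℕ :=
  if 1 ≤ k.val then
    (if y k ≠ y ⟨k.val - 1, by have := k.isLt; omega⟩ then 2^(m - k.val) else 0)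
  else 0

def Qp {m : ℕ} (y : Fin m → Bool) : ℕ := ∑ k : Fin m, tm y k

lemma tm_congr {m : ℕ} (y y' : Fin m → Bool) (k : Fin m)
    (h1 : y' k = y k) (h2 : y' ⟨k.val - 1, by have := k.isLt; omega⟩ = y ⟨k.val - 1, by have := k.isLt; omega⟩) :
    tm y' k = tm y k := by
  simp [tm, h1, h2]

lemma tm_le {m : ℕ} (y : Fin m → Bool) (k : Fin m) : tm y k ≤ 2^(m - k.val) := by
  unfold tm; split <;> [skip; simp]
  split <;> simp

lemma Qp_lt {m : ℕ} (y : Fin m → Bool) (j : Fin m) (hj : 1 ≤ j.val)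
    (heff : y j ≠ y ⟨j.val - 1, by have := j.isLt; omega⟩) :
    Qp (Function.update y j (y ⟨j.val - 1, by have := j.isLt; omega⟩)) < Qp y := by
  set y' := Function.update y j (y ⟨j.val - 1, by have := j.isLt; omega⟩) with hy'
  have hjm1 : (⟨j.val - 1, by have := j.isLt; omega⟩ : Fin m) ≠ j :=
    Fin.ne_of_val_ne (show j.val - 1 ≠ j.val by omega)
  have hy'j : y' j = y ⟨j.val - 1, by have := j.isLt; omega⟩ := Function.update_self _ _ _
  have hy'jm1 : y' ⟨j.val - 1, by have := j.isLt; omega⟩ = y ⟨j.val - 1, by have := j.isLt; omega⟩ :=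
    Function.update_of_ne hjm1 _ _
  have htm'j : tm y' j = 0 := by
    unfold tm
    rw [if_pos hj, hy'j, hy'jm1]
    simp
  have htmj : tm y j = 2^(m - j.val) := by
    unfold tm
    rw [if_pos hj, if_pos heff]
  have hkey : ∀ k : Fin m, k ≠ j → k.val ≠ j.val + 1 → tm y' k = tm y k := by
    intro k hk1 hk2
    apply tm_congr
    · exact Function.update_of_ne hk1 _ _
    · exact Function.update_of_ne
        (Fin.ne_of_val_ne (show k.val - 1 ≠ j.val by have := k.isLt; omega)) _ _
  by_cases h1 : j.val + 1 < m
  · set j₁ : Fin m := ⟨j.val + 1, h1⟩ with hj₁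
    have hne : j₁ ≠ j := Fin.ne_of_val_ne (by simp [hj₁])
    have hmem1 : j ∈ (Finset.univ : Finset (Fin m)) := Finset.mem_univ _
    have hmem2 : j₁ ∈ Finset.univ.erase j := Finset.mem_erase.2 ⟨hne, Finset.mem_univ _⟩
    have hsplit : ∀ z : Fin m → Bool,
        Qp z = (∑ k ∈ (Finset.univ.erase j).erase j₁, tm z k) + tm z j₁ + tm z j := by
      intro z
      rw [Qp, ← Finset.sum_erase_add _ _ hmem1, ← Finset.sum_erase_add _ _ hmem2]
    rw [hsplit y, hsplit y']
    have hcong : ∑ k ∈ (Finset.univ.erase j).erase j₁, tm y' k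
        = ∑ k ∈ (Finset.univ.erase j).erase j₁, tm y k := by
      apply Finset.sum_congr rfl
      intro k hk
      simp only [Finset.mem_erase] at hk
      exact hkey k hk.2.1 (fun h => hk.1 (Fin.ext h))
    rw [hcong, htm'j, htmj]
    have h2 : tm y' j₁ ≤ 2^(m - (j.val + 1)) := tm_le y' j₁
    have h3 : (2:ℕ)^(m - (j.val + 1)) < 2^(m - j.val) :=
      Nat.pow_lt_pow_right (by norm_num) (by omega)
    omega
  · have hkey' : ∀ k : Fin m, k ≠ j → tm y' k = tm y k := by
      intro k hk
      exact hkey k hk (by have := k.isLt; omega)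
    have hsplit : ∀ z : Fin m → Bool,
        Qp z = (∑ k ∈ Finset.univ.erase j, tm z k) + tm z j := by
      intro z
      rw [Qp, ← Finset.sum_erase_add _ _ (Finset.mem_univ j)]
    rw [hsplit y, hsplit y']
    have hcong : ∑ k ∈ Finset.univ.erase j, tm y' k = ∑ k ∈ Finset.univ.erase j, tm y k := by
      apply Finset.sum_congr rfl
      intro k hk
      exact hkey' k (Finset.mem_erase.1 hk).1
    rw [hcong, htm'j, htmj]
    have : 0 < 2^(m - j.val) := Nat.pow_pos (by norm_num)
    omega

lemma Qp_le {m : ℕ} (y : Fin m → Bool) (j : Fin m) (hj : 1 ≤ j.val) :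
    Qp (Function.update y j (y ⟨j.val - 1, by have := j.isLt; omega⟩)) ≤ Qp y := by
  by_cases heff : y j = y ⟨j.val - 1, by have := j.isLt; omega⟩
  · rw [← heff, Function.update_eq_self]
  · exact le_of_lt (Qp_lt y j hj heff)


lemma back {n m : ℕ} (hn : 1 < n) (hodd : n % 2 = 1)
    (fc : Cfg n m → Bool)
    (hfc : ∀ z : Cfg n m, z.1 ⟨n - 1, by omega⟩ = true → fc z = false)
    {z z' : Cfg n m} (hs : Step fc z z')
    (hz' : ∀ i : Fin n, z'.1 i = decide (i.val % 2 = 0)) :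
    (∀ i : Fin n, z.1 i = decide (i.val % 2 = 0)) ∧ Qp z'.2 ≤ Qp z.2 := by
  cases hs with
  | left i hi =>
    exfalso
    dsimp only at hz'
    have e1 := hz' i
    have e2 := hz' ⟨i.val - 1, by have := i.isLt; omega⟩
    rw [Function.update_self] at e1
    rw [Function.update_of_ne (Fin.ne_of_val_ne (show i.val - 1 ≠ i.val by omega))] at e2
    rw [e2] at e1
    simp only [Fin.val_mk, decide_eq_decide] at e1
    omega
  | right j hj =>
    exact ⟨hz', Qp_le z.2 j hj⟩
  | center i j hi hj =>
    exfalso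
    dsimp only at hz'
    have e1 := hz' i
    have e2 := hz' ⟨n - 1, by omega⟩
    rw [Function.update_self] at e1
    rw [Function.update_of_ne (Fin.ne_of_val_ne (show n - 1 ≠ i.val by omega))] at e2
    have h1 : z.1 ⟨n - 1, by omega⟩ = true := by
      rw [e2]; simp only [Fin.val_mk, decide_eq_true_eq]; omega
    rw [hfc z h1] at e1
    simp only [hi, decide_eq_true_eq] at e1
    exact Bool.false_ne_true (e1.symm ▸ rfl)

end My15

/-- In a canonical negative double-cycle whose left cycle has odd size n > 1, any
configuration whose left part is the alternating word (10)^{(n-1)/2}1 is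
irreversible: after any effective update it can never be reached again. -/
theorem stmt15 (n m : ℕ) (hn : 1 < n) (hodd : n % 2 = 1) (hm : 0 < m)
    (x : Cfg n m) (hshare : x.1 ⟨0, by omega⟩ = x.2 ⟨0, by omega⟩)
    (hxl : ∀ i : Fin n, x.1 i = decide (i.val % 2 = 0)) :
    ∀ x' : Cfg n m,
      Step (fun z : Cfg n m => !(z.1 ⟨n - 1, by omega⟩) && !(z.2 ⟨m - 1, by omega⟩)) x x' →
      x' ≠ x →
      ¬ Relation.ReflTransGen
          (Step (fun z : Cfg n m => !(z.1 ⟨n - 1, by omega⟩) && !(z.2 ⟨m - 1, by omega⟩)))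
          x' x := by
  intro x' hstep hne hreach
  set fc : Cfg n m → Bool :=
    fun z : Cfg n m => !(z.1 ⟨n - 1, by omega⟩) && !(z.2 ⟨m - 1, by omega⟩) with hfcdef
  have hfc : ∀ z : Cfg n m, z.1 ⟨n - 1, by omega⟩ = true → fc z = false := by
    intro z hz
    simp only [hfcdef, hz, Bool.not_true, Bool.false_and]
  have key : ∀ z : Cfg n m, Relation.ReflTransGen (Step fc) z x →
      (∀ i : Fin n, z.1 i = decide (i.val % 2 = 0)) ∧ My15.Qp x.2 ≤ My15.Qp z.2 := by
    intro z h
    induction h using Relation.ReflTransGen.head_induction_on with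
    | refl => exact ⟨hxl, le_refl _⟩
    | head hstep' _ ih =>
      obtain ⟨h1, h2⟩ := My15.back hn hodd fc hfc hstep' ih.1
      exact ⟨h1, le_trans ih.2 h2⟩
  obtain ⟨hx'l, hQ⟩ := key x' hreach
  cases hstep with
  | left i hi =>
    dsimp only at hx'l
    have e1 := hx'l i
    have e2 := hx'l ⟨i.val - 1, by have := i.isLt; omega⟩
    rw [Function.update_self] at e1
    rw [Function.update_of_ne (Fin.ne_of_val_ne (show i.val - 1 ≠ i.val by omega))] at e2
    rw [e2] at e1
    simp only [Fin.val_mk, decide_eq_decide] at e1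
    omega
  | center i j hi hj =>
    dsimp only at hx'l
    have e1 := hx'l i
    rw [Function.update_self] at e1
    have h1 : x.1 ⟨n - 1, by omega⟩ = true := by
      rw [hxl]; simp only [Fin.val_mk, decide_eq_true_eq]; omega
    rw [hfc x h1] at e1
    simp only [hi, decide_eq_true_eq] at e1
    exact Bool.false_ne_true (e1.symm ▸ rfl)
  | right j hj =>
    dsimp only at hQ hne
    have heff : x.2 j ≠ x.2 ⟨j.val - 1, by have := j.isLt; omega⟩ := by
      intro hcontra
      apply hne
      rw [← hcontra, Function.update_eq_self]
    have := My15.Qp_lt x.2 j hj heff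
    omega
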